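/- Let A be a real n × n antisymmetric matrix with rank A = 2r, and let W ⊆ ℝⁿ be a linear subspace with dim W = n − r such that xᵀ A y = 0 for all x, y ∈ W. Then the kernel of A is contained in W, and the image A(W) := {A w : w ∈ W} equals the orthogonal complement W^⊥ of W (with respect to the standard inner product on ℝⁿ); in particular dim A(W) = r. -/

import Mathlib

open Matrix

/-- Pointwise linear algebra underlying Proposition 3.2 of the paper: if `A` is a real
antisymmetric `n × n` matrix of rank `2r` and `W` is an `(n−r)`-dimensional subspace of `ℝⁿ`
on which the bilinear form of `A` vanishes, then `ker A ⊆ W` and `A(W)` is the orthogonal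
complement of `W` for the standard inner product; in particular `dim A(W) = r`. -/
theorem isotropic_subspace_image (n r : ℕ) (A : Matrix (Fin n) (Fin n) ℝ)
    (hanti : Aᵀ = -A) (hrank : A.rank = 2 * r)
    (W : Submodule ℝ (Fin n → ℝ)) (hdim : Module.finrank ℝ W = n - r)
    (hiso : ∀ x ∈ W, ∀ y ∈ W, dotProduct x (A.mulVec y) = 0) :
    (∀ x : Fin n → ℝ, A.mulVec x = 0 → x ∈ W) ∧
    (A.mulVec '' (W : Set (Fin n → ℝ))
      = {y : Fin n → ℝ | ∀ w ∈ W, dotProduct w y = 0}) ∧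
    Module.finrank ℝ (Submodule.map A.mulVecLin W) = r := by
  classical
  set f := A.mulVecLin with hf
  set K := LinearMap.ker f with hK
  set e := WithLp.linearEquiv 2 ℝ (Fin n → ℝ) with he
  set W' : Submodule ℝ (EuclideanSpace ℝ (Fin n)) := W.comap e.toLinearMap with hW'
  have hfrE : Module.finrank ℝ (EuclideanSpace ℝ (Fin n)) = n := by simp
  have hr2n : 2 * r ≤ n := by
    rw [← hrank]; exact A.rank_le_card_width.trans (by simp)
  have hrn : Module.finrank ℝ (LinearMap.range f) + Module.finrank ℝ K = n := by
    have := LinearMap.finrank_range_add_finrank_ker f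
    simpa using this
  have hrange : Module.finrank ℝ (LinearMap.range f) = 2 * r := hrank
  have hKdim : Module.finrank ℝ K = n - 2 * r := by omega
  have hinner : ∀ x y : EuclideanSpace ℝ (Fin n),
      (inner ℝ x y : ℝ) = dotProduct x.ofLp y.ofLp := by
    intro x y
    simp [PiLp.inner_apply, dotProduct, RCLike.inner_apply, mul_comm]
  have hWperp : Module.finrank ℝ W'ᗮ = r := by
    have h1 := Submodule.finrank_add_finrank_orthogonal W'
    have h2 : Module.finrank ℝ W' = n - r := by
      rw [hW', Submodule.comap_equiv_eq_map_symm, LinearEquiv.finrank_map_eq]; exact hdim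
    omega
  set P : Submodule ℝ (Fin n → ℝ) := W'ᗮ.comap e.symm.toLinearMap with hP
  have hPdim : Module.finrank ℝ P = r := by
    rw [hP, Submodule.comap_equiv_eq_map_symm, LinearEquiv.finrank_map_eq]; exact hWperp
  set M := Submodule.map f W with hM
  have hMle : M ≤ P := by
    rintro y ⟨w, hw, rfl⟩
    exact (Submodule.mem_orthogonal W' (e.symm (f w))).mpr
      (fun u hu => (hinner u (e.symm (f w))).trans (hiso u.ofLp hu w hw))
  have hMle' : Module.finrank ℝ M ≤ r := hPdim ▸ Submodule.finrank_mono hMle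
  have hg : Module.finrank ℝ M + Module.finrank ℝ (K ⊓ W : Submodule ℝ (Fin n → ℝ)) = n - r := by
    have h1 := LinearMap.finrank_range_add_finrank_ker (f.domRestrict W)
    rw [LinearMap.range_domRestrict, LinearMap.ker_domRestrict] at h1
    have h2 : Module.finrank ℝ (Submodule.comap W.subtype K) =
        Module.finrank ℝ (K ⊓ W : Submodule ℝ (Fin n → ℝ)) := by
      have he : Submodule.comap W.subtype K = Submodule.comap W.subtype (K ⊓ W) := by
        rw [Submodule.comap_inf, Submodule.comap_subtype_self, inf_top_eq]
      rw [he]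
      exact (Submodule.comapSubtypeEquivOfLe inf_le_right).finrank_eq
    rw [h2] at h1
    rw [← hdim, ← h1]
  have hKW : Module.finrank ℝ K ≤ Module.finrank ℝ (K ⊓ W : Submodule ℝ (Fin n → ℝ)) := by
    omega
  have hKsub : K ≤ W := by
    have := Submodule.eq_of_le_of_finrank_le inf_le_left hKW
    rw [← this]; exact inf_le_right
  have hKWeq : (K ⊓ W : Submodule ℝ (Fin n → ℝ)) = K := inf_eq_left.mpr hKsub
  have hMdim : Module.finrank ℝ M = r := by
    rw [hKWeq, hKdim] at hg; omega
  have hMeq : M = P :=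
    Submodule.eq_of_le_of_finrank_le hMle (le_of_eq (hPdim.trans hMdim.symm))
  refine ⟨fun x hx => hKsub hx, ?_, hMdim⟩
  ext y
  constructor
  · rintro ⟨w, hw, rfl⟩
    intro u hu
    have hmem : f w ∈ M := Submodule.mem_map_of_mem hw
    rw [hMeq] at hmem
    exact (hinner (WithLp.toLp 2 u) (e.symm (f w))).symm.trans
      ((Submodule.mem_orthogonal W' (e.symm (f w))).mp hmem (WithLp.toLp 2 u) hu)
  · intro hy
    have hmem : y ∈ P := (Submodule.mem_orthogonal W' (e.symm y)).mpr
      (fun u hu => (hinner u (e.symm y)).trans (hy u.ofLp hu))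
    rw [← hMeq] at hmem
    obtain ⟨w, hw, rfl⟩ := hmem
    exact ⟨w, hw, rfl⟩
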